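/- Let p, q ∈ (0,1) with p + q ≤ 1, and let ε₁, ε₂ > 0. Let A, B ⊆ P([n]) be families with μ_p(A) ≥ 1 − ε₁ and μ_q(B) ≥ 1 − ε₂. Then μ_{p+q}(A ⊔ B) ≥ 1 − ε₁ − ε₂, where A ⊔ B denotes the family of all sets D₁ ∪ D₂ with D₁ ∈ A, D₂ ∈ B and D₁ ∩ D₂ = ∅. -/

import Mathlib

open Finset

/-- The `p`-biased measure of a family of subsets of `Fin n`. -/
def biasedMu (n : ℕ) (p : ℝ) (F : Finset (Finset (Fin n))) : ℝ :=
  ∑ A ∈ F, p ^ A.card * (1 - p) ^ (n - A.card)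

private lemma sum_powerset_pow {α : Type*} [DecidableEq α] (s : Finset α) (a b : ℝ) :
    ∑ t ∈ s.powerset, a ^ t.card * b ^ (s.card - t.card) = (a + b) ^ s.card := by
  rw [← Finset.prod_const, Finset.prod_add]
  apply Finset.sum_congr rfl
  intro t ht
  rw [Finset.prod_const, Finset.prod_const, Finset.card_sdiff_of_subset (Finset.mem_powerset.mp ht)]

/-- Weight of a pair of sets. -/
private def pairW (n : ℕ) (p q : ℝ) (st : Finset (Fin n) × Finset (Fin n)) : ℝ :=
  p ^ st.1.card * q ^ st.2.card * (1 - p - q) ^ (n - (st.1.card + st.2.card))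

private def pairOmega (n : ℕ) : Finset (Finset (Fin n) × Finset (Fin n)) :=
  Finset.univ.filter fun st => Disjoint st.1 st.2

private lemma sum_omega_eq_left {n : ℕ} (g : Finset (Fin n) × Finset (Fin n) → ℝ) :
    ∑ st ∈ pairOmega n, g st = ∑ S : Finset (Fin n), ∑ T ∈ Sᶜ.powerset, g (S, T) := by
  rw [pairOmega, Finset.sum_filter, Fintype.sum_prod_type]
  apply Finset.sum_congr rfl
  intro S _
  rw [← Finset.sum_filter]
  apply Finset.sum_congr _ (fun _ _ => rfl)
  ext T
  simp only [Finset.mem_filter, Finset.mem_univ, true_and, Finset.mem_powerset]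
  exact le_compl_iff_disjoint_left.symm

private lemma sum_omega_eq_right {n : ℕ} (g : Finset (Fin n) × Finset (Fin n) → ℝ) :
    ∑ st ∈ pairOmega n, g st = ∑ T : Finset (Fin n), ∑ S ∈ Tᶜ.powerset, g (S, T) := by
  rw [pairOmega, Finset.sum_filter, Fintype.sum_prod_type, Finset.sum_comm]
  apply Finset.sum_congr rfl
  intro T _
  rw [← Finset.sum_filter]
  apply Finset.sum_congr _ (fun _ _ => rfl)
  ext S
  simp only [Finset.mem_filter, Finset.mem_univ, true_and, Finset.mem_powerset]
  exact le_compl_iff_disjoint_right.symm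

private lemma key_left {n : ℕ} (p q : ℝ) (S : Finset (Fin n)) :
    ∑ T ∈ Sᶜ.powerset, pairW n p q (S, T) = p ^ S.card * (1 - p) ^ (n - S.card) := by
  have h1 : ∀ T ∈ Sᶜ.powerset, pairW n p q (S, T)
      = p ^ S.card * (q ^ T.card * (1 - p - q) ^ (Sᶜ.card - T.card)) := by
    intro T hT
    have hc : n - (S.card + T.card) = Sᶜ.card - T.card := by
      rw [Finset.card_compl, Fintype.card_fin, Nat.sub_sub]
    rw [pairW, hc]; ring
  rw [Finset.sum_congr rfl h1, ← Finset.mul_sum, sum_powerset_pow]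
  have h2 : q + (1 - p - q) = 1 - p := by ring
  rw [h2, Finset.card_compl, Fintype.card_fin]

private lemma key_right {n : ℕ} (p q : ℝ) (T : Finset (Fin n)) :
    ∑ S ∈ Tᶜ.powerset, pairW n p q (S, T) = q ^ T.card * (1 - q) ^ (n - T.card) := by
  have h1 : ∀ S ∈ Tᶜ.powerset, pairW n p q (S, T)
      = q ^ T.card * (p ^ S.card * (1 - p - q) ^ (Tᶜ.card - S.card)) := by
    intro S hS
    have hc : n - (S.card + T.card) = Tᶜ.card - S.card := by
      rw [Finset.card_compl, Fintype.card_fin, Nat.add_comm, Nat.sub_sub]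
    rw [pairW, hc]; ring
  rw [Finset.sum_congr rfl h1, ← Finset.mul_sum, sum_powerset_pow]
  have h2 : p + (1 - p - q) = 1 - q := by ring
  rw [h2, Finset.card_compl, Fintype.card_fin]

private lemma total_one {n : ℕ} (p q : ℝ) : ∑ st ∈ pairOmega n, pairW n p q st = 1 := by
  rw [sum_omega_eq_left]
  have h : ∀ S ∈ (Finset.univ : Finset (Finset (Fin n))),
      ∑ T ∈ Sᶜ.powerset, pairW n p q (S, T) = p ^ S.card * (1 - p) ^ (n - S.card) :=
    fun S _ => key_left p q S
  rw [Finset.sum_congr rfl h]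
  have h2 : (Finset.univ : Finset (Finset (Fin n))) = (Finset.univ : Finset (Fin n)).powerset :=
    (Finset.powerset_univ).symm
  rw [h2]
  have h3 : ∀ S ∈ (Finset.univ : Finset (Fin n)).powerset,
      p ^ S.card * (1 - p) ^ (n - S.card)
      = p ^ S.card * (1 - p) ^ ((Finset.univ : Finset (Fin n)).card - S.card) := by
    intro S _
    rw [Finset.card_univ, Fintype.card_fin]
  rw [Finset.sum_congr rfl h3, sum_powerset_pow]
  norm_num

private lemma fiber_sum {n : ℕ} (p q : ℝ) (U : Finset (Fin n)) :
    ∑ st ∈ (pairOmega n).filter (fun st => st.1 ∪ st.2 = U), pairW n p q st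
      = (p + q) ^ U.card * (1 - (p + q)) ^ (n - U.card) := by
  rw [Finset.sum_nbij' (i := fun st => st.1) (j := fun S => (S, U \ S))
    (t := U.powerset)
    (g := fun S => (p ^ S.card * q ^ (U.card - S.card)) * (1 - p - q) ^ (n - U.card))
    (hi := by
      intro st hst
      have hst' := Finset.mem_filter.mp hst
      exact Finset.mem_powerset.mpr (hst'.2 ▸ Finset.subset_union_left))
    (hj := by
      intro S hS
      refine Finset.mem_filter.mpr ⟨?_, Finset.union_sdiff_of_subset (Finset.mem_powerset.mp hS)⟩
      exact Finset.mem_filter.mpr ⟨Finset.mem_univ _, Finset.disjoint_sdiff⟩)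
    (left_neg := by
      intro st hst
      have hst' := Finset.mem_filter.mp hst
      have hd := (Finset.mem_filter.mp hst'.1).2
      have h : U \ st.1 = st.2 := by
        rw [← hst'.2, Finset.union_sdiff_cancel_left hd]
      show (st.1, U \ st.1) = st
      rw [h])
    (right_neg := fun S hS => rfl)
    (h := by
      intro st hst
      have hst' := Finset.mem_filter.mp hst
      have hd := (Finset.mem_filter.mp hst'.1).2
      have hcard : st.1.card + st.2.card = U.card := by
        rw [← hst'.2, Finset.card_union_of_disjoint hd]
      have h2 : st.2.card = U.card - st.1.card := by omega
      show pairW n p q st = (p ^ st.1.card * q ^ (U.card - st.1.card)) * (1 - p - q) ^ (n - U.card)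
      rw [pairW, h2]
      have h3 : n - (st.1.card + (U.card - st.1.card)) = n - U.card := by omega
      rw [h3])]
  rw [← Finset.sum_mul, sum_powerset_pow]
  have : 1 - p - q = 1 - (p + q) := by ring
  rw [this]

open Classical in
theorem stmt0 (n : ℕ) (p q ε₁ ε₂ : ℝ)
    (hp : p ∈ Set.Ioo (0:ℝ) 1) (hq : q ∈ Set.Ioo (0:ℝ) 1) (hpq : p + q ≤ 1)
    (hε₁ : 0 < ε₁) (hε₂ : 0 < ε₂)
    (A B : Finset (Finset (Fin n)))
    (hA : biasedMu n p A ≥ 1 - ε₁) (hB : biasedMu n q B ≥ 1 - ε₂) :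
    biasedMu n (p + q)
      ((Finset.univ : Finset (Finset (Fin n))).filter
        (fun D => ∃ D₁ ∈ A, ∃ D₂ ∈ B, Disjoint D₁ D₂ ∧ D = D₁ ∪ D₂)) ≥ 1 - ε₁ - ε₂ := by
  set C := ((Finset.univ : Finset (Finset (Fin n))).filter
      (fun D => ∃ D₁ ∈ A, ∃ D₂ ∈ B, Disjoint D₁ D₂ ∧ D = D₁ ∪ D₂)) with hCdef
  have hw : ∀ st, 0 ≤ pairW n p q st := fun st =>
    mul_nonneg (mul_nonneg (pow_nonneg hp.1.le _) (pow_nonneg hq.1.le _))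
      (pow_nonneg (by linarith) _)
  -- marginal 1
  have hE1 : ∑ st ∈ pairOmega n, (if st.1 ∈ A then pairW n p q st else 0) = biasedMu n p A := by
    rw [sum_omega_eq_left]
    have h1 : ∀ S ∈ (Finset.univ : Finset (Finset (Fin n))),
        (∑ T ∈ Sᶜ.powerset, if S ∈ A then pairW n p q (S, T) else 0)
        = if S ∈ A then p ^ S.card * (1 - p) ^ (n - S.card) else 0 := by
      intro S _
      by_cases hS : S ∈ A
      · simp only [hS, if_true]; exact key_left p q S
      · simp [hS]
    rw [Finset.sum_congr rfl h1, Finset.sum_ite_mem, Finset.univ_inter, biasedMu]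
  -- marginal 2
  have hE2 : ∑ st ∈ pairOmega n, (if st.2 ∈ B then pairW n p q st else 0) = biasedMu n q B := by
    rw [sum_omega_eq_right]
    have h1 : ∀ T ∈ (Finset.univ : Finset (Finset (Fin n))),
        (∑ S ∈ Tᶜ.powerset, if T ∈ B then pairW n p q (S, T) else 0)
        = if T ∈ B then q ^ T.card * (1 - q) ^ (n - T.card) else 0 := by
      intro T _
      by_cases hT : T ∈ B
      · simp only [hT, if_true]; exact key_right p q T
      · simp [hT]
    rw [Finset.sum_congr rfl h1, Finset.sum_ite_mem, Finset.univ_inter, biasedMu]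
  -- biasedMu of C as a sum over Omega
  have hC : (∑ st ∈ pairOmega n, (if st.1 ∪ st.2 ∈ C then pairW n p q st else 0))
      = biasedMu n (p + q) C := by
    rw [← Finset.sum_fiberwise_of_maps_to
      (g := fun st : Finset (Fin n) × Finset (Fin n) => st.1 ∪ st.2)
      (fun st _ => Finset.mem_univ _)]
    have h1 : ∀ U ∈ (Finset.univ : Finset (Finset (Fin n))),
        (∑ st ∈ (pairOmega n).filter (fun st => st.1 ∪ st.2 = U),
          if st.1 ∪ st.2 ∈ C then pairW n p q st else 0)
        = if U ∈ C then (p + q) ^ U.card * (1 - (p + q)) ^ (n - U.card) else 0 := by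
      intro U _
      have h2 : ∀ st ∈ (pairOmega n).filter (fun st => st.1 ∪ st.2 = U),
          (if st.1 ∪ st.2 ∈ C then pairW n p q st else 0)
          = if U ∈ C then pairW n p q st else 0 := by
        intro st hst
        rw [(Finset.mem_filter.mp hst).2]
      rw [Finset.sum_congr rfl h2]
      by_cases hU : U ∈ C
      · simp only [hU, if_true]; exact fiber_sum p q U
      · simp [hU]
    rw [Finset.sum_congr rfl h1, Finset.sum_ite_mem, Finset.univ_inter, biasedMu]
  -- pointwise inequalities
  have hpt : ∀ st ∈ pairOmega n,
      (if st.1 ∈ A then pairW n p q st else 0) + (if st.2 ∈ B then pairW n p q st else 0)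
        - pairW n p q st ≤ (if st.1 ∪ st.2 ∈ C then pairW n p q st else 0) := by
    intro st hst
    have hdisj : Disjoint st.1 st.2 := (Finset.mem_filter.mp hst).2
    by_cases h1 : st.1 ∈ A
    · by_cases h2 : st.2 ∈ B
      · have hmem : st.1 ∪ st.2 ∈ C := by
          rw [hCdef, Finset.mem_filter]
          exact ⟨Finset.mem_univ _, st.1, h1, st.2, h2, hdisj, rfl⟩
        simp only [h1, h2, hmem, if_true]
        linarith [hw st]
      · simp only [h1, h2, if_true, if_false]
        have := hw st
        split <;> linarith
    · simp only [h1, if_false]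
      by_cases h2 : st.2 ∈ B <;> simp only [h2, if_true, if_false] <;>
        [skip; skip] <;> (have := hw st; split <;> linarith)
  have hsum := Finset.sum_le_sum hpt
  rw [Finset.sum_sub_distrib, Finset.sum_add_distrib, hE1, hE2, total_one p q, hC] at hsum
  linarith
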